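/- Let λ* be a finite self-repelling *-loop in the square lattice ℤ² such that the bounded ℤ²-connected component of ℤ² ∖ V(λ*) is nonempty. Then every site of λ* has at least one ℤ²-neighbor in the bounded component of ℤ² ∖ V(λ*) and at least one ℤ²-neighbor in the unbounded component of ℤ² ∖ V(λ*). -/

import Mathlib

open MeasureTheory Filter Set Topology
open scoped ENNReal

namespace PercEnh

/-- Sites of the lattice (vertex set `ℤ²`). -/
abbrev Site : Type := ℤ × ℤ

/-- A configuration: the set of open sites. -/
abbrev Config : Type := Set Site

/-- Square-lattice (`ℤ²`-) adjacency: `‖x − y‖₁ = 1`. -/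
def adjZ2 (x y : Site) : Prop := |x.1 - y.1| + |x.2 - y.2| = 1

/-- Matching (star) adjacency: `x ≠ y` and `‖x − y‖_∞ = 1`. -/
def adjStar (x y : Site) : Prop := x ≠ y ∧ max |x.1 - y.1| |x.2 - y.2| = 1

/-- Euclidean norm of a site. -/
noncomputable def siteNorm (x : Site) : ℝ := Real.sqrt ((x.1 : ℝ) ^ 2 + (x.2 : ℝ) ^ 2)

/-- Sites in the closed Euclidean ball of radius `r` centred at the origin. -/
def siteBall (r : ℝ) : Set Site := {x | siteNorm x ≤ r}

/-- The shifted configuration `τ_x ω = {y − x : y ∈ ω}`. -/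
def shiftConfig (x : Site) (ω : Config) : Config := {y | y + x ∈ ω}

/-- An enhancement function of (finite) range `R₀`: takes values in subsets of
`𝔹₀ = ℤ² ∩ B(R₀)` and depends only on the restriction of the configuration to `𝔹₀`. -/
def IsEnhancement (R₀ : ℝ) (φ : Config → Config) : Prop :=
  0 ≤ R₀ ∧ (∀ ω, φ ω ⊆ siteBall R₀) ∧
    ∀ ω ω' : Config, ω ∩ siteBall R₀ = ω' ∩ siteBall R₀ → φ ω = φ ω'

/-- A monotonic enhancement function. -/
def Monotonic (φ : Config → Config) : Prop := ∀ ω ω' : Config, ω ⊆ ω' → φ ω ⊆ φ ω'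

/-- The translate `φ_x(ω) = x + φ₀(τ_x ω)`. -/
def enhAt (φ : Config → Config) (x : Site) (ω : Config) : Config :=
  (fun z => z + x) '' φ (shiftConfig x ω)

/-- The enhanced configuration `ω̂(ω, α) = ω ∪ ⋃_{x : α(x)=1} φ_x(ω)`. -/
def enhanced (φ : Config → Config) (ω : Config) (α : Site → Bool) : Config :=
  ω ∪ {y | ∃ x, α x = true ∧ y ∈ enhAt φ x ω}

/-- The fully (deterministically, with `s = 1`) enhanced configuration `ω̃`. -/
def fullyEnhanced (φ : Config → Config) (ω : Config) : Config :=
  ω ∪ {y | ∃ x, y ∈ enhAt φ x ω}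

/-- `ω` contains a doubly-infinite self-repelling path (w.r.t. adjacency `adj`):
a two-sided sequence of distinct sites of `ω` in which exactly the consecutive
pairs are adjacent. -/
def HasDISRPath (adj : Site → Site → Prop) (ω : Config) : Prop :=
  ∃ γ : ℤ → Site, Function.Injective γ ∧ (∀ i, γ i ∈ ω) ∧
    ∀ i j : ℤ, adj (γ i) (γ j) ↔ (j = i + 1 ∨ i = j + 1)

/-- The enhancement is essential: some configuration without a doubly-infinite
self-repelling path acquires one upon enhancement at the origin. -/
def Essential (adj : Site → Site → Prop) (φ : Config → Config) : Prop :=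
  ∃ ω : Config, ¬ HasDISRPath adj ω ∧ HasDISRPath adj (ω ∪ φ ω)

/-- A (finite, nonempty) path w.r.t. adjacency `adj`: distinct sites,
consecutive ones adjacent. -/
def IsPathOn (adj : Site → Site → Prop) (l : List Site) : Prop :=
  l ≠ [] ∧ l.Nodup ∧ l.Chain' adj

/-- `x` and `y` are joined by a path of sites of `ω`. -/
def ConnectedIn (adj : Site → Site → Prop) (ω : Config) (x y : Site) : Prop :=
  ∃ l : List Site, IsPathOn adj l ∧ (∀ z ∈ l, z ∈ ω) ∧
    l.head? = some x ∧ l.getLast? = some y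

/-- `x` belongs to an infinite open cluster of `ω`. -/
def InInfiniteCluster (adj : Site → Site → Prop) (ω : Config) (x : Site) : Prop :=
  {y | ConnectedIn adj ω x y}.Infinite

/-- `ω` contains an infinite open cluster. -/
def HasInfiniteCluster (adj : Site → Site → Prop) (ω : Config) : Prop :=
  ∃ x, InInfiniteCluster adj ω x

/-- The configuration corresponding to `η : Site → Bool`. -/
def toConfig (η : Site → Bool) : Config := {x | η x = true}

/-- A cylinder event. -/
def cylinder (F : Finset Site) (b : Site → Bool) : Set (Site → Bool) :=
  {η | ∀ x ∈ F, η x = b x}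

/-- `μ` is the Bernoulli product measure with density `p` of open sites. -/
def IsBernoulli (p : ℝ) (μ : Measure (Site → Bool)) : Prop :=
  IsProbabilityMeasure μ ∧
    ∀ (F : Finset Site) (b : Site → Bool),
      μ (cylinder F b) = ∏ x ∈ F, ENNReal.ofReal (if b x then p else 1 - p)

/-- The percolation probability `θ`: the probability that the origin lies in an
infinite open cluster. -/
noncomputable def theta (adj : Site → Site → Prop) (μ : Measure (Site → Bool)) : ℝ :=
  (μ {η | InInfiniteCluster adj (toConfig η) 0}).toReal

/-- The percolation probability of the enhanced process (`μ` the law of the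
configuration, `ν` the law of the activation variables). -/
noncomputable def thetaEnh (adj : Site → Site → Prop) (φ : Config → Config)
    (μ ν : Measure (Site → Bool)) : ℝ :=
  ((μ.prod ν) {ηα | InInfiniteCluster adj (enhanced φ (toConfig ηα.1) ηα.2) 0}).toReal

/-- The critical point `p_c = sup {p ∈ [0,1] : θ(p) = 0}` for the family `P`. -/
noncomputable def pcOf (adj : Site → Site → Prop) (P : ℝ → Measure (Site → Bool)) : ℝ :=
  sSup {p | p ∈ Icc (0:ℝ) 1 ∧ theta adj (P p) = 0}

/-- The connectivity function `τ_p(x)`. -/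
noncomputable def tau (adj : Site → Site → Prop) (μ : Measure (Site → Bool)) (x : Site) : ℝ :=
  (μ {η | ConnectedIn adj (toConfig η) 0 x}).toReal

/-- The connectivity function `τ_{p,s}(x)` of the enhanced process. -/
noncomputable def tauEnh (adj : Site → Site → Prop) (φ : Config → Config)
    (μ ν : Measure (Site → Bool)) (x : Site) : ℝ :=
  ((μ.prod ν) {ηα | ConnectedIn adj (enhanced φ (toConfig ηα.1) ηα.2) 0 x}).toReal

/-- The mean cluster size `χ(p) = E_p‖C‖ = ∑_x τ_p(x)`. -/
noncomputable def chi (adj : Site → Site → Prop) (μ : Measure (Site → Bool)) : ℝ≥0∞ :=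
  ∑' x : Site, μ {η | ConnectedIn adj (toConfig η) 0 x}

/-- The mean cluster size of the enhanced process. -/
noncomputable def chiEnh (adj : Site → Site → Prop) (φ : Config → Config)
    (μ ν : Measure (Site → Bool)) : ℝ≥0∞ :=
  ∑' x : Site, (μ.prod ν) {ηα | ConnectedIn adj (enhanced φ (toConfig ηα.1) ηα.2) 0 x}


/-- A self-repelling `*`-loop: a cyclic sequence of `k ≥ 3` distinct sites in which
exactly the cyclically consecutive pairs are `*`-adjacent. -/
def IsSelfRepellingStarLoop (k : ℕ) (γ : ZMod k → Site) : Prop :=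
  3 ≤ k ∧ Function.Injective γ ∧
    ∀ i j : ZMod k, adjStar (γ i) (γ j) ↔ (j = i + 1 ∨ i = j + 1)

/-- `x` and `y` are joined by a `ℤ²`-path all of whose sites avoid `V`. -/
def avoidConn (V : Set Site) (x y : Site) : Prop :=
  ∃ l : List Site, IsPathOn adjZ2 l ∧ (∀ z ∈ l, z ∉ V) ∧
    l.head? = some x ∧ l.getLast? = some y

/-- The `ℤ²`-connected component of `x` in `ℤ² ∖ V`. -/
def component (V : Set Site) (x : Site) : Set Site := {y | avoidConn V x y}

/-- `A` is a `ℤ²`-connected component of `ℤ² ∖ V`. -/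
def IsComponentOf (V A : Set Site) : Prop := ∃ x, x ∉ V ∧ A = component V x


/-! ### Auxiliary machinery for Statement 18 -/

section Statement18Aux

instance adjZ2.dec (x y : Site) : Decidable (adjZ2 x y) :=
  inferInstanceAs (Decidable (|x.1 - y.1| + |x.2 - y.2| = 1))

lemma adjZ2_symm {x y : Site} (h : adjZ2 x y) : adjZ2 y x := by
  unfold adjZ2 at *; rw [abs_sub_comm y.1, abs_sub_comm y.2]; exact h

lemma adjZ2_translate (x y a : Site) : adjZ2 (x + a) (y + a) ↔ adjZ2 x y := by
  unfold adjZ2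
  have h1 : (x + a).1 - (y + a).1 = x.1 - y.1 := by simp
  have h2 : (x + a).2 - (y + a).2 = x.2 - y.2 := by simp
  rw [h1, h2]

variable {V : Set Site} {x y z : Site}

lemma avoidConn_refl (hx : x ∉ V) : avoidConn V x x :=
  ⟨[x], ⟨by simp, by simp, List.isChain_singleton _⟩, by simpa using hx, by simp, by simp⟩

lemma avoidConn.not_mem_left (h : avoidConn V x y) : x ∉ V := by
  obtain ⟨l, hp, hV, hh, -⟩ := h
  exact hV x (List.mem_of_mem_head? (by simp [hh]))

lemma avoidConn.not_mem_right (h : avoidConn V x y) : y ∉ V := by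
  obtain ⟨l, hp, hV, -, hl⟩ := h
  exact hV y (List.mem_of_getLast? hl)

/-- extend a path by one vertex, chopping if it revisits -/
lemma avoidConn.extend (h : avoidConn V x y) (ha : adjZ2 y z) (hz : z ∉ V) :
    avoidConn V x z := by
  obtain ⟨l, ⟨hne, hnd, hch⟩, hV, hh, hl⟩ := h
  by_cases hmem : z ∈ l
  · obtain ⟨s, t, rfl⟩ := List.append_of_mem hmem
    have hleq : s ++ z :: t = (s ++ [z]) ++ t := by simp
    have hpre : (s ++ [z]) <+: (s ++ z :: t) := ⟨t, hleq.symm⟩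
    refine ⟨s ++ [z], ⟨by simp, hnd.sublist hpre.sublist, hch.prefix hpre⟩, ?_, ?_, ?_⟩
    · intro w hw; exact hV w (hpre.sublist.mem hw)
    · have : (s ++ [z]).head? = (s ++ z :: t).head? := by
        cases s with
        | nil => simp
        | cons a t' => simp
      rw [this, hh]
    · rw [List.getLast?_append_of_ne_nil] <;> simp
  · refine ⟨l ++ [z], ⟨by simp, ?_, ?_⟩, ?_, ?_, ?_⟩
    · simp [List.nodup_append, hnd, hmem]
      rintro a b hab rfl; exact hmem hab
    · show List.IsChain _ _; rw [List.isChain_append]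
      refine ⟨hch, by simp, ?_⟩
      intro a ha' b hb
      simp only [List.head?_cons, Option.mem_def, Option.some.injEq] at hb
      rw [Option.mem_def, hl] at ha'
      injection ha' with ha''
      subst ha''; subst hb; exact ha
    · intro w hw; rcases List.mem_append.1 hw with h1 | h2
      · exact hV w h1
      · simp at h2; subst h2; exact hz
    · rw [List.head?_append_of_ne_nil _ hne]; exact hh
    · rw [List.getLast?_append_of_ne_nil] <;> simp

lemma avoidConn.symm (h : avoidConn V x y) : avoidConn V y x := by
  obtain ⟨l, ⟨hne, hnd, hch⟩, hV, hh, hl⟩ := h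
  refine ⟨l.reverse, ⟨by simpa using hne, List.nodup_reverse.2 hnd, ?_⟩, by simpa using hV, ?_, ?_⟩
  · show List.IsChain _ _; rw [List.isChain_reverse]
    exact List.IsChain.imp (fun a b hab => adjZ2_symm hab) hch
  · rw [List.head?_reverse]; exact hl
  · rw [List.getLast?_reverse]; exact hh

private lemma walk_extend : ∀ (t : List Site) (y : Site), avoidConn V x y →
    List.Chain adjZ2 y t → (∀ w ∈ t, w ∉ V) →
    avoidConn V x ((y::t).getLast (by simp)) := by
  intro t
  induction t with
  | nil => intro y h _ _; simpa using h
  | cons b t ih =>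
    intro y h hch hV
    have h1 : avoidConn V x b := h.extend (List.chain_cons.1 hch).1 (hV b (by simp))
    have h2 := ih b h1 (List.chain_cons.1 hch).2 (fun w hw => hV w (by simp [hw]))
    simpa [List.getLast_cons] using h2

lemma avoidConn.trans (h1 : avoidConn V x y) (h2 : avoidConn V y z) : avoidConn V x z := by
  obtain ⟨l, ⟨hne, hnd, hch⟩, hV, hh, hl⟩ := h2
  obtain ⟨a, t, rfl⟩ := List.exists_cons_of_ne_nil hne
  simp only [List.head?_cons, Option.some.injEq] at hh; subst hh
  have hw := walk_extend t a h1 hch (fun w hw => hV w (by simp [hw]))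
  have hgl : (a::t).getLast (by simp) = z := by
    rw [List.getLast?_eq_getLast (by simp)] at hl
    simpa using hl
  rwa [hgl] at hw

lemma component_eq_of_avoidConn {y y' : Site} (h : avoidConn V y y') :
    component V y = component V y' := by
  ext w; exact ⟨fun hw => h.symm.trans hw, fun hw => h.trans hw⟩

/-! ### The ring around a site, and the decidable local connection lemma -/

def chainB : List Site → Bool
  | [] => true
  | [_] => true
  | a :: b :: t => decide (adjZ2 a b) && chainB (b :: t)

lemma chainB_iff : ∀ l : List Site, chainB l = true ↔ l.Chain' adjZ2
  | [] => by simp [chainB]; exact List.IsChain.nil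
  | [a] => by simp [chainB]; exact List.IsChain.singleton _
  | a :: b :: t => by
    rw [show List.Chain' adjZ2 (a :: b :: t) ↔ adjZ2 a b ∧ List.Chain' adjZ2 (b :: t) from List.isChain_cons_cons, ← chainB_iff (b :: t)]
    simp [chainB]

def ringL : List Site := [(1,0),(1,1),(0,1),(-1,1),(-1,0),(-1,-1),(0,-1),(1,-1)]
def R4l : List Site := [(1,0),(0,1),(-1,0),(0,-1)]

def arc (i d m : ℕ) : List Site :=
  (List.range (m+1)).map (fun t => ringL.getD ((i + d*t) % 8) (0,0))

def cands (u : Site) : List (List Site) :=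
  ((List.range 7).map (fun m => arc (ringL.idxOf u) 1 m)) ++
  ((List.range 7).map (fun m => arc (ringL.idxOf u) 7 m))

lemma key : ∀ p ∈ ringL, ∀ q ∈ ringL, ∀ u ∈ R4l,
    q ≠ p → (max |q.1 - p.1| |q.2 - p.2| ≠ 1) → u ≠ q → u ≠ p →
    ∃ l ∈ cands u, (l.Nodup ∧ chainB l = true) ∧
      (∀ z ∈ l, (max |z.1| |z.2| = 1) ∧ z ≠ q ∧ z ≠ p) ∧
      l.head? = some u ∧ ∃ e, l.getLast? = some e ∧ adjZ2 e p := by decide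

lemma mem_ringL_of {v : Site} (h : max |v.1| |v.2| = 1) : v ∈ ringL := by
  obtain ⟨a, b⟩ := v
  simp only at h
  have h1 : |a| ≤ 1 := le_of_le_of_eq (le_max_left _ _) h
  have h2 : |b| ≤ 1 := le_of_le_of_eq (le_max_right _ _) h
  have h3 : |a| = 1 ∨ |b| = 1 := by
    rcases max_choice |a| |b| with hc | hc
    · exact Or.inl (hc.symm.trans h)
    · exact Or.inr (hc.symm.trans h)
  have ha0 := abs_nonneg a
  have hb0 := abs_nonneg b
  rcases abs_choice a with ha | ha <;> rcases abs_choice b with hb | hb <;>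
    simp only [ha] at * <;> simp only [hb] at * <;> simp [ringL, Prod.ext_iff] <;> omega

lemma mem_R4l_of {v : Site} (h : |v.1| + |v.2| = 1) : v ∈ R4l := by
  obtain ⟨a, b⟩ := v
  simp only at h
  have ha0 := abs_nonneg a
  have hb0 := abs_nonneg b
  rcases abs_choice a with ha | ha <;> rcases abs_choice b with hb | hb <;>
    simp only [ha] at * <;> simp only [hb] at * <;> simp [R4l, Prod.ext_iff] <;> omega

/-! ### Rays to infinity -/

lemma ray_comp (V : Set Site) (z d : Site) (hz : z ∉ V) (hd : d ∈ R4l)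
    (hall : ∀ n : ℕ, ((z.1 + ((n:ℤ)+1) * d.1, z.2 + ((n:ℤ)+1) * d.2) : Site) ∉ V) :
    (component V z).Infinite := by
  set f : ℕ → Site := fun n => (z.1 + (n:ℤ) * d.1, z.2 + (n:ℤ) * d.2) with hf
  have hd1 : |d.1| + |d.2| = 1 := by
    fin_cases hd <;> norm_num
  have hmem : ∀ n, f n ∈ component V z := by
    intro n
    induction n with
    | zero => simpa [hf, component] using avoidConn_refl hz
    | succ n ih =>
      have hadj : adjZ2 (f n) (f (n+1)) := by
        show |_| + |_| = 1
        have e1 : (f n).1 - (f (n+1)).1 = -d.1 := by simp [hf]; ring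
        have e2 : (f n).2 - (f (n+1)).2 = -d.2 := by simp [hf]; ring
        rw [e1, e2, abs_neg, abs_neg]; exact hd1
      have hnotV : f (n+1) ∉ V := by
        have hthis := hall n
        have he : f (n+1) = ((z.1 + ((n:ℤ)+1) * d.1, z.2 + ((n:ℤ)+1) * d.2) : Site) := by
          simp only [hf, Prod.mk.injEq]
          constructor <;> push_cast <;> ring
        rwa [he]
      exact (ih : avoidConn V z (f n)).extend hadj hnotV
  have hinj : Function.Injective f := by
    intro m n hmn
    fin_cases hd <;> simp [hf, Prod.ext_iff] at hmn <;> omega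
  exact Set.infinite_of_injective_forall_mem hinj hmem

lemma ray_hit (V : Set Site) {z d : Site} (hfin : (component V z).Finite) (hz : z ∉ V)
    (hd : d ∈ R4l) :
    ∃ n : ℕ, ((z.1 + ((n:ℤ)+1) * d.1, z.2 + ((n:ℤ)+1) * d.2) : Site) ∈ V := by
  by_contra hc
  push_neg at hc
  exact (ray_comp V z d hz hd hc) hfin

/-- from a point of a finite component, going straight up we first meet `V`,
at a site having a neighbour in the component. -/
lemma ray_first_hit (V : Set Site) {z : Site} (hfin : (component V z).Finite) (hz : z ∉ V) :
    ∃ w v, avoidConn V z w ∧ adjZ2 v w ∧ v ∈ V := by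
  classical
  have hup : ∃ n : ℕ, ((z.1, z.2 + (n:ℤ) + 1) : Site) ∈ V := by
    obtain ⟨n, hn⟩ := ray_hit V hfin hz (show ((0,1) : Site) ∈ R4l by simp [R4l])
    exact ⟨n, by simpa [← add_assoc] using hn⟩
  set n₀ := Nat.find hup with hn₀
  have hspec : ((z.1, z.2 + (n₀:ℤ) + 1) : Site) ∈ V := Nat.find_spec hup
  have hmin : ∀ m, m < n₀ → ((z.1, z.2 + (m:ℤ) + 1) : Site) ∉ V := fun m hm => Nat.find_min hup hm
  have hconn : ∀ m : ℕ, m ≤ n₀ → avoidConn V z ((z.1, z.2 + (m:ℤ)) : Site) := by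
    intro m
    induction m with
    | zero => intro _; simpa using avoidConn_refl hz
    | succ m ih =>
      intro hm
      have h1 := ih (by omega)
      have he : ((z.1, z.2 + ((m:ℕ)+1:ℕ)) : Site) = ((z.1, z.2 + (m:ℤ) + 1) : Site) := by
        simp only [Prod.mk.injEq]
        constructor
        · trivial
        · push_cast; ring
      rw [he]
      refine h1.extend ?_ (hmin m (by omega))
      show |z.1 - z.1| + |(z.2 + (m:ℤ)) - (z.2 + (m:ℤ) + 1)| = 1
      have e2 : (z.2 + (m:ℤ)) - (z.2 + (m:ℤ) + 1) = -1 := by ring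
      rw [e2]
      norm_num
  refine ⟨((z.1, z.2 + (n₀:ℤ)) : Site), ((z.1, z.2 + (n₀:ℤ) + 1) : Site),
    hconn n₀ le_rfl, ?_, hspec⟩
  show |_| + |_| = 1
  simp

end Statement18Aux

/-- let `λ*` be a finite self-repelling `*`-loop in `ℤ²` whose
bounded complementary component is nonempty. Then every site of `λ*` has at least one
`ℤ²`-neighbor in the bounded component of `ℤ² ∖ V(λ*)` and at least one `ℤ²`-neighbor
in the unbounded component. -/
theorem loop_sites_have_neighbors_in_both_components (k : ℕ) (γ : ZMod k → Site)
    (h : IsSelfRepellingStarLoop k γ)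
    (hbdd : ∃ x, x ∉ Set.range γ ∧ (component (Set.range γ) x).Finite) :
    ∀ i : ZMod k,
      (∃ y, adjZ2 (γ i) y ∧ y ∉ Set.range γ ∧ (component (Set.range γ) y).Finite) ∧
      (∃ y, adjZ2 (γ i) y ∧ y ∉ Set.range γ ∧ (component (Set.range γ) y).Infinite) := by
  classical
  obtain ⟨hk, hinj, hsr⟩ := h
  haveI : NeZero k := ⟨by omega⟩
  obtain ⟨x₀, hx₀V, hx₀fin⟩ := hbdd
  set V : Set Site := Set.range γ with hVdef
  -- `k = 3` is impossible: a finite component forces four distinct sites of `V`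
  have hk3 : k ≠ 3 := by
    intro hk3
    subst hk3
    obtain ⟨n1, h1⟩ := ray_hit V hx₀fin hx₀V (show ((1,0) : Site) ∈ R4l by simp [R4l])
    obtain ⟨n2, h2⟩ := ray_hit V hx₀fin hx₀V (show ((0,1) : Site) ∈ R4l by simp [R4l])
    obtain ⟨n3, h3⟩ := ray_hit V hx₀fin hx₀V (show ((-1,0) : Site) ∈ R4l by simp [R4l])
    obtain ⟨n4, h4⟩ := ray_hit V hx₀fin hx₀V (show ((0,-1) : Site) ∈ R4l by simp [R4l])
    simp only at h1 h2 h3 h4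
    set v1 : Site := (x₀.1 + ((n1:ℤ)+1) * 1, x₀.2 + ((n1:ℤ)+1) * 0) with hv1
    set v2 : Site := (x₀.1 + ((n2:ℤ)+1) * 0, x₀.2 + ((n2:ℤ)+1) * 1) with hv2
    set v3 : Site := (x₀.1 + ((n3:ℤ)+1) * (-1), x₀.2 + ((n3:ℤ)+1) * 0) with hv3
    set v4 : Site := (x₀.1 + ((n4:ℤ)+1) * 0, x₀.2 + ((n4:ℤ)+1) * (-1)) with hv4
    have hd12 : v1 ≠ v2 := by simp [hv1, hv2, Prod.ext_iff]; omega
    have hd13 : v1 ≠ v3 := by simp [hv1, hv3, Prod.ext_iff]; omega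
    have hd14 : v1 ≠ v4 := by simp [hv1, hv4, Prod.ext_iff]; omega
    have hd23 : v2 ≠ v3 := by simp [hv2, hv3, Prod.ext_iff]; omega
    have hd24 : v2 ≠ v4 := by simp [hv2, hv4, Prod.ext_iff]; omega
    have hd34 : v3 ≠ v4 := by simp [hv3, hv4, Prod.ext_iff]; omega
    have hsub : ({v1, v2, v3, v4} : Finset Site) ⊆ Finset.univ.image γ := by
      intro w hw
      simp only [Finset.mem_insert, Finset.mem_singleton] at hw
      have hwV : w ∈ V := by
        rcases hw with rfl | rfl | rfl | rfl
        · exact h1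
        · exact h2
        · exact h3
        · exact h4
      obtain ⟨j, rfl⟩ := hwV
      exact Finset.mem_image.2 ⟨j, Finset.mem_univ _, rfl⟩
    have hcard : ({v1, v2, v3, v4} : Finset Site).card = 4 := by
      rw [Finset.card_insert_of_notMem (by simp [hd12, hd13, hd14]),
          Finset.card_insert_of_notMem (by simp [hd23, hd24]),
          Finset.card_insert_of_notMem (by simp [hd34]),
          Finset.card_singleton]
    have hle := Finset.card_le_card hsub
    rw [hcard] at hle
    have him := Finset.card_image_le (s := (Finset.univ : Finset (ZMod 3))) (f := γ)
    rw [Finset.card_univ, ZMod.card] at him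
    omega
  have hcastne : ∀ m : ℕ, 0 < m → m < k → (m : ZMod k) ≠ 0 := by
    intro m hm hmk h0
    have := (ZMod.natCast_eq_zero_iff m k).1 h0
    have := Nat.le_of_dvd hm this
    omega
  -- the key local step along the loop
  have step : ∀ (j : ZMod k) (y : Site), adjZ2 (γ j) y → y ∉ V →
      ∃ y', adjZ2 (γ (j+1)) y' ∧ y' ∉ V ∧ avoidConn V y y' := by
    intro j y hy hyV
    set a : Site := γ j with ha
    set p : Site := γ (j+1) - a with hp
    set q : Site := γ (j-1) - a with hq
    set u : Site := y - a with hu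
    have hadj_p : adjStar a (γ (j+1)) := (hsr j (j+1)).2 (Or.inl rfl)
    have hadj_q : adjStar a (γ (j-1)) := (hsr j (j-1)).2 (Or.inr (by ring))
    have hpR : p ∈ ringL := by
      apply mem_ringL_of
      have h2 := hadj_p.2
      simp only [hp, Prod.fst_sub, Prod.snd_sub]
      rw [abs_sub_comm ((γ (j+1)).1), abs_sub_comm ((γ (j+1)).2)]
      exact h2
    have hqR : q ∈ ringL := by
      apply mem_ringL_of
      have h2 := hadj_q.2
      simp only [hq, Prod.fst_sub, Prod.snd_sub]
      rw [abs_sub_comm ((γ (j-1)).1), abs_sub_comm ((γ (j-1)).2)]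
      exact h2
    have hne_idx : γ (j-1) ≠ γ (j+1) := by
      intro h0
      have h1 := hinj h0
      have h2 : (2 : ZMod k) = 0 := by linear_combination -h1
      have h2' : ((2:ℕ) : ZMod k) = 0 := by push_cast; exact h2
      exact hcastne 2 (by norm_num) (by omega) h2'
    have hne_qp : q ≠ p := by
      intro h0
      apply hne_idx
      have : γ (j-1) - a = γ (j+1) - a := h0
      have := congrArg (· + a) this
      simpa using this
    have hnadj : ¬ adjStar (γ (j-1)) (γ (j+1)) := by
      intro had
      rcases (hsr (j-1) (j+1)).1 had with h' | h'
      · have h2 : (1 : ZMod k) = 0 := by linear_combination h'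
        have h2' : ((1:ℕ) : ZMod k) = 0 := by push_cast; exact h2
        exact hcastne 1 (by norm_num) (by omega) h2'
      · have h2 : (3 : ZMod k) = 0 := by linear_combination -h'
        have h2' : ((3:ℕ) : ZMod k) = 0 := by push_cast; exact h2
        exact hcastne 3 (by norm_num) (by omega) h2'
    have hmaxne : max |q.1 - p.1| |q.2 - p.2| ≠ 1 := by
      intro h1
      apply hnadj
      refine ⟨hne_idx, ?_⟩
      have e1 : (γ (j-1)).1 - (γ (j+1)).1 = q.1 - p.1 := by
        simp only [hq, hp, Prod.fst_sub]; ring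
      have e2 : (γ (j-1)).2 - (γ (j+1)).2 = q.2 - p.2 := by
        simp only [hq, hp, Prod.snd_sub]; ring
      rw [e1, e2]; exact h1
    have hu4 : u ∈ R4l := by
      apply mem_R4l_of
      have h2 := hy
      simp only [hu, Prod.fst_sub, Prod.snd_sub]
      rw [abs_sub_comm y.1, abs_sub_comm y.2]
      exact h2
    have huq : u ≠ q := by
      intro h0
      apply hyV
      have : y - a = γ (j-1) - a := h0
      have := congrArg (· + a) this
      rw [sub_add_cancel, sub_add_cancel] at this
      exact ⟨j-1, this.symm⟩
    have hup : u ≠ p := by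
      intro h0
      apply hyV
      have : y - a = γ (j+1) - a := h0
      have := congrArg (· + a) this
      rw [sub_add_cancel, sub_add_cancel] at this
      exact ⟨j+1, this.symm⟩
    obtain ⟨l, hlmem, ⟨hnd, hchB⟩, hall, hhead, e, hlast, headj⟩ :=
      key p hpR q hqR u hu4 hne_qp hmaxne huq hup
    have hch : l.Chain' adjZ2 := (chainB_iff l).1 hchB
    -- points of the shifted path avoid V
    have havoid : ∀ w ∈ l.map (· + a), w ∉ V := by
      intro w hw hwV
      obtain ⟨zpt, hzl, rfl⟩ := List.mem_map.1 hw
      obtain ⟨hzmax, hzq, hzp⟩ := hall zpt hzl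
      obtain ⟨j', hj'⟩ := hwV
      have hzne : zpt ≠ 0 := by
        intro h0
        rw [h0] at hzmax
        simp at hzmax
      have hadj' : adjStar a (γ j') := by
        refine ⟨?_, ?_⟩
        · intro h0
          apply hzne
          have : γ j' = zpt + a := hj'.symm ▸ rfl
          rw [← h0] at this
          have := congrArg (· - a) this
          simpa using this.symm
        · rw [hj']
          have e1 : a.1 - (zpt + a).1 = -zpt.1 := by simp
          have e2 : a.2 - (zpt + a).2 = -zpt.2 := by simp
          rw [e1, e2, abs_neg, abs_neg]
          exact hzmax
      rcases (hsr j j').1 hadj' with h' | h'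
      · apply hzp
        have : γ j' = zpt + a := hj'.symm ▸ rfl
        rw [h'] at this
        have := congrArg (· - a) this
        simpa [hp] using this.symm
      · apply hzq
        have hj'' : j' = j - 1 := by linear_combination -h'
        have : γ j' = zpt + a := hj'.symm ▸ rfl
        rw [hj''] at this
        have := congrArg (· - a) this
        simpa [hq] using this.symm
    have hlne : l ≠ [] := by
      intro h0; rw [h0] at hhead; simp at hhead
    refine ⟨e + a, ?_, ?_, ?_⟩
    · have := (adjZ2_translate e p a).2 headj
      have hpa : p + a = γ (j+1) := by rw [hp]; ring
      rw [hpa] at this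
      exact adjZ2_symm this
    · apply havoid
      exact List.mem_map.2 ⟨e, List.mem_of_getLast? hlast, rfl⟩
    · refine ⟨l.map (· + a), ⟨by simpa using hlne, ?_, ?_⟩, havoid, ?_, ?_⟩
      · exact hnd.map (add_left_injective a)
      · show List.IsChain _ _; rw [List.isChain_map]
        exact List.IsChain.imp (fun w1 w2 h12 => (adjZ2_translate w1 w2 a).2 h12) hch
      · rw [List.head?_map, hhead]
        simp only [Option.map_some]
        rw [hu, sub_add_cancel]
      · rw [List.getLast?_map, hlast]
        simp only [Option.map_some]
  -- a starting index with a neighbour in a finite component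
  have start_fin : ∃ (i₁ : ZMod k) (y : Site), adjZ2 (γ i₁) y ∧ y ∉ V ∧
      (component V y).Finite := by
    obtain ⟨w, v, hzw, hvw, hvV⟩ := ray_first_hit V hx₀fin hx₀V
    obtain ⟨i₁, rfl⟩ := hvV
    refine ⟨i₁, w, hvw, hzw.not_mem_right, ?_⟩
    rw [← component_eq_of_avoidConn hzw]
    exact hx₀fin
  -- a starting index with a neighbour in an infinite component
  have start_inf : ∃ (i₀ : ZMod k) (y : Site), adjZ2 (γ i₀) y ∧ y ∉ V ∧
      (component V y).Infinite := by
    obtain ⟨g, hgmem, hgmax⟩ := (Set.finite_range γ).exists_maximalFor Prod.snd _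
      ⟨γ 0, ⟨0, rfl⟩⟩
    have hle : ∀ w ∈ V, w.2 ≤ g.2 := by
      intro w hw
      by_contra hlt
      push_neg at hlt
      have := hgmax (j := w) hw (le_of_lt hlt)
      omega
    set ystar : Site := (g.1, g.2 + 1) with hystar
    have hysV : ystar ∉ V := by
      intro hin
      have h2 : g.2 + 1 ≤ g.2 := hle _ hin
      omega
    obtain ⟨i₀, rfl⟩ := hgmem
    refine ⟨i₀, ystar, ?_, hysV, ?_⟩
    · show |_| + |_| = 1
      simp [hystar]
    · apply ray_comp V ystar (0,1) hysV (by simp [R4l])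
      intro n hin
      have h2 : (γ i₀).2 + 1 + ((n:ℤ)+1) * 1 ≤ (γ i₀).2 := hle _ hin
      rw [mul_one] at h2
      omega
  -- propagation around the loop
  have trans : ∀ (i₁ : ZMod k) (y : Site), adjZ2 (γ i₁) y → y ∉ V →
      ∀ n : ℕ, ∃ y', adjZ2 (γ (i₁ + n)) y' ∧ y' ∉ V ∧
        component V y' = component V y := by
    intro i₁ y hy hyV n
    induction n with
    | zero => exact ⟨y, by simpa using hy, hyV, rfl⟩
    | succ n ih =>
      obtain ⟨y', hy', hy'V, hcomp⟩ := ih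
      obtain ⟨y'', hy'', hy''V, hconn⟩ := step (i₁ + n) y' hy' hy'V
      have hidx : (i₁ + (n:ℕ)) + 1 = i₁ + ((n+1 : ℕ) : ZMod k) := by push_cast; ring
      refine ⟨y'', by rwa [← hidx], hy''V, ?_⟩
      rw [← component_eq_of_avoidConn hconn]
      exact hcomp
  -- conclusion
  intro i
  constructor
  · obtain ⟨i₁, y, hy, hyV, hfin⟩ := start_fin
    obtain ⟨y', hy', hy'V, hcomp⟩ := trans i₁ y hy hyV (i - i₁).val
    have hidx : i₁ + ((i - i₁).val : ZMod k) = i := by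
      rw [ZMod.natCast_val, ZMod.cast_id]; ring
    rw [hidx] at hy'
    exact ⟨y', hy', hy'V, by rw [hcomp]; exact hfin⟩
  · obtain ⟨i₀, y, hy, hyV, hinf⟩ := start_inf
    obtain ⟨y', hy', hy'V, hcomp⟩ := trans i₀ y hy hyV (i - i₀).val
    have hidx : i₀ + ((i - i₀).val : ZMod k) = i := by
      rw [ZMod.natCast_val, ZMod.cast_id]; ring
    rw [hidx] at hy'
    exact ⟨y', hy', hy'V, by rw [hcomp]; exact hinf⟩


end PercEnh
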